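/- arXiv:1902.07100 — 3 statements merged into one kernel-verified Lean document; each statement's English description precedes it below -/
import Mathlib

section
/- Let α > 0 and let P ∈ C²([0,∞)) satisfy P(0) = 0 and P'(r) ≥ α for all r ≥ 0 (so that P is a bijection from [0,∞) onto [0,∞) with inverse P^{-1}). Then the function f(r) := r · P^{-1}(r) is convex on [0,∞) if and only if P(r) · P''(r) ≤ 2 · (P'(r))² for all r ≥ 0. -/
open Set

private lemma aux_deriv_nonneg {g : ℝ → ℝ} {x c : ℝ} (hx : 0 < x)
    (hm : MonotoneOn g (Set.Ioi 0)) (hd : HasDerivAt g c x) : 0 ≤ c := by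
  have h := hd.hasDerivWithinAt (s := Set.Ioi x)
  rw [hasDerivWithinAt_iff_tendsto_slope' (notMem_Ioi_self)] at h
  refine ge_of_tendsto h ?_
  filter_upwards [self_mem_nhdsWithin] with y hy
  have hy1 : x < y := hy
  have h1 : g x ≤ g y := hm (Set.mem_Ioi.2 hx) (Set.mem_Ioi.2 (hx.trans hy1)) hy1.le
  have h2 : 0 ≤ (g y - g x) / (y - x) := div_nonneg (by linarith) (by linarith)
  simpa [slope_def_field] using h2

/-- For `P ∈ C²([0,∞))` with `P(0) = 0` and `P' ≥ α > 0` (with inverse `Q`),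
the function `f(r) = r · P⁻¹(r)` is convex on `[0,∞)` iff `P·P'' ≤ 2(P')²` on `[0,∞)`. -/
theorem stmt1 (α : ℝ) (hα : 0 < α) (P P' P'' Q : ℝ → ℝ)
    (hP0 : P 0 = 0)
    (hP' : ∀ r ∈ Set.Ici (0 : ℝ), HasDerivAt P (P' r) r)
    (hP'' : ∀ r ∈ Set.Ici (0 : ℝ), HasDerivAt P' (P'' r) r)
    (hP''cont : ContinuousOn P'' (Set.Ici 0))
    (hPα : ∀ r ∈ Set.Ici (0 : ℝ), α ≤ P' r)
    -- `Q` is the inverse function `P⁻¹`, a bijection of `[0,∞)` onto itself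
    (hQmem : ∀ r ∈ Set.Ici (0 : ℝ), Q r ∈ Set.Ici (0 : ℝ))
    (hPQ : ∀ r ∈ Set.Ici (0 : ℝ), P (Q r) = r)
    (hQP : ∀ r ∈ Set.Ici (0 : ℝ), Q (P r) = r) :
    ConvexOn ℝ (Set.Ici 0) (fun r => r * Q r) ↔
      ∀ r ∈ Set.Ici (0 : ℝ), P r * P'' r ≤ 2 * (P' r) ^ 2 := by
  have hP'pos : ∀ r ∈ Set.Ici (0 : ℝ), 0 < P' r := fun r hr => lt_of_lt_of_le hα (hPα r hr)
  -- mean value bound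
  have key : ∀ a ∈ Ici (0:ℝ), ∀ b ∈ Ici (0:ℝ), a ≤ b → α * (b - a) ≤ P b - P a := by
    refine (convex_Ici 0).mul_sub_le_image_sub_of_le_deriv
      (fun x hx => (hP' x hx).continuousAt.continuousWithinAt) ?_ ?_
    · rw [interior_Ici]
      exact fun x hx => (hP' x (mem_Ioi.1 hx).le).differentiableAt.differentiableWithinAt
    · rw [interior_Ici]
      intro x hx
      rw [(hP' x (mem_Ioi.1 hx).le).deriv]
      exact hPα x (mem_Ioi.1 hx).le
  -- Q is monotone
  have hQmono : ∀ a ∈ Ici (0:ℝ), ∀ b ∈ Ici (0:ℝ), a ≤ b → Q a ≤ Q b := by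
    intro a ha b hb hab
    by_contra h
    push_neg at h
    have h2 := key (Q b) (hQmem b hb) (Q a) (hQmem a ha) h.le
    rw [hPQ a ha, hPQ b hb] at h2
    nlinarith
  -- Q is Lipschitz, hence continuous, on [0,∞)
  have hQlip : ∀ a ∈ Ici (0:ℝ), ∀ b ∈ Ici (0:ℝ), a ≤ b → Q b - Q a ≤ α⁻¹ * (b - a) := by
    intro a ha b hb hab
    have h2 := key (Q a) (hQmem a ha) (Q b) (hQmem b hb) (hQmono a ha b hb hab)
    rw [hPQ a ha, hPQ b hb] at h2
    have h3 := mul_le_mul_of_nonneg_left h2 (le_of_lt (inv_pos.2 hα))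
    rw [← mul_assoc, inv_mul_cancel₀ hα.ne', one_mul] at h3
    linarith
  have hQcont : ContinuousOn Q (Ici 0) := by
    have hlip : LipschitzOnWith (Real.toNNReal α⁻¹) Q (Ici 0) := by
      rw [lipschitzOnWith_iff_dist_le_mul]
      intro a ha b hb
      have hcoe : (Real.toNNReal α⁻¹ : ℝ) = α⁻¹ := Real.coe_toNNReal _ (by positivity)
      rcases le_total a b with h | h
      · have h1 := hQmono a ha b hb h
        have h2 := hQlip a ha b hb h
        rw [Real.dist_eq, Real.dist_eq, hcoe, abs_of_nonpos (by linarith),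
          abs_of_nonpos (by linarith)]
        linarith
      · have h1 := hQmono b hb a ha h
        have h2 := hQlip b hb a ha h
        rw [Real.dist_eq, Real.dist_eq, hcoe, abs_of_nonneg (by linarith),
          abs_of_nonneg (by linarith)]
        linarith
    exact hlip.continuousOn
  have hQpos : ∀ x : ℝ, 0 < x → 0 < Q x := by
    intro x hx
    rcases (mem_Ici.1 (hQmem x hx.le)).lt_or_eq with h | h
    · exact h
    · exfalso
      have h2 := hPQ x hx.le
      rw [← h, hP0] at h2
      linarith
  -- derivative of Q on (0,∞)
  have hQd : ∀ x ∈ Ioi (0:ℝ), HasDerivAt Q (P' (Q x))⁻¹ x := by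
    intro x hx
    have hQx : 0 < Q x := hQpos x hx
    have hcontQ : ContinuousAt Q x := hQcont.continuousAt (Ici_mem_nhds hx)
    have hstrict : HasStrictDerivAt P (P' (Q x)) (Q x) := by
      refine hasStrictDerivAt_of_hasDerivAt_of_continuousAt ?_
        ((hP'' (Q x) (hQmem x (mem_Ioi.1 hx).le)).continuousAt)
      filter_upwards [Ioi_mem_nhds hQx] with y hy
      exact hP' y (mem_Ioi.1 hy).le
    have hne : P' (Q x) ≠ 0 := (hP'pos (Q x) (hQmem x (mem_Ioi.1 hx).le)).ne'
    refine (hstrict.of_local_left_inverse hcontQ hne ?_).hasDerivAt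
    filter_upwards [Ioi_mem_nhds hx] with y hy
    exact hPQ y (mem_Ioi.1 hy).le
  -- derivative of f on (0,∞)
  have hfd : ∀ x ∈ Ioi (0:ℝ), HasDerivAt (fun r => r * Q r) (Q x + x * (P' (Q x))⁻¹) x := by
    intro x hx
    have := (hasDerivAt_id x).fun_mul (hQd x hx)
    simpa using this
  -- derivative of g = f' on (0,∞)
  have hgd : ∀ x ∈ Ioi (0:ℝ),
      HasDerivAt (fun y => Q y + y * (P' (Q y))⁻¹)
        ((2 * (P' (Q x)) ^ 2 - x * P'' (Q x)) / (P' (Q x)) ^ 3) x := by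
    intro x hx
    have hQx : 0 < Q x := hQpos x hx
    have hne : P' (Q x) ≠ 0 := (hP'pos (Q x) (hQmem x (mem_Ioi.1 hx).le)).ne'
    have h1 : HasDerivAt (fun y => P' (Q y)) (P'' (Q x) * (P' (Q x))⁻¹) x :=
      (hP'' (Q x) (hQmem x (mem_Ioi.1 hx).le)).comp x (hQd x hx)
    have h2 : HasDerivAt (fun y => (P' (Q y))⁻¹)
        (-(P'' (Q x) * (P' (Q x))⁻¹) / (P' (Q x)) ^ 2) x := h1.inv hne
    have h3 := (hasDerivAt_id' x).fun_mul h2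
    have h4 := (hQd x hx).fun_add h3
    refine h4.congr_deriv ?_
    field_simp
    ring
  constructor
  · -- convex → inequality
    intro hconv r hr
    rcases eq_or_lt_of_le (mem_Ici.1 hr) with h0 | h0
    · rw [← h0, hP0]
      have h1 := hP'pos 0 (mem_Ici.2 le_rfl)
      nlinarith
    · have hPr : (0:ℝ) < P r := by
        have := key 0 (mem_Ici.2 le_rfl) r hr h0.le
        rw [hP0] at this
        nlinarith
      have hQPr : Q (P r) = r := hQP r hr
      have hconv' : ConvexOn ℝ (Ioi (0:ℝ)) (fun r => r * Q r) :=
        hconv.subset Ioi_subset_Ici_self (convex_Ioi 0)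
      have hmono : MonotoneOn (deriv (fun r => r * Q r)) (Ioi (0:ℝ)) :=
        hconv'.monotoneOn_deriv fun y hy => (hfd y hy).differentiableAt
      have hmonog : MonotoneOn (fun y => Q y + y * (P' (Q y))⁻¹) (Ioi (0:ℝ)) := by
        intro a ha b hb hab
        have hda := (hfd a ha).deriv
        have hdb := (hfd b hb).deriv
        simp only []
        rw [← hda, ← hdb]
        exact hmono ha hb hab
      have h2 := hgd (P r) hPr
      rw [hQPr] at h2
      have h0' := aux_deriv_nonneg hPr hmonog h2
      have hP'r : 0 < P' r := hP'pos r hr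
      have h5 := mul_nonneg h0' (le_of_lt (pow_pos hP'r 3))
      rw [div_mul_cancel₀ _ (pow_pos hP'r 3).ne'] at h5
      linarith
  · -- inequality → convex
    intro hineq
    refine convexOn_of_deriv2_nonneg (convex_Ici 0) ?_ ?_ ?_ ?_
    · exact continuousOn_id.mul hQcont
    · rw [interior_Ici]
      exact fun x hx => (hfd x hx).differentiableAt.differentiableWithinAt
    · rw [interior_Ici]
      intro x hx
      have hev : deriv (fun r => r * Q r) =ᶠ[nhds x] fun y => Q y + y * (P' (Q y))⁻¹ := by
        filter_upwards [Ioi_mem_nhds hx] with y hy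
        exact (hfd y hy).deriv
      exact (hev.differentiableAt_iff.2 (hgd x hx).differentiableAt).differentiableWithinAt
    · rw [interior_Ici]
      intro x hx
      have hev : deriv (fun r => r * Q r) =ᶠ[nhds x] fun y => Q y + y * (P' (Q y))⁻¹ := by
        filter_upwards [Ioi_mem_nhds hx] with y hy
        exact (hfd y hy).deriv
      have h1 : deriv^[2] (fun r => r * Q r) x
          = (2 * (P' (Q x)) ^ 2 - x * P'' (Q x)) / (P' (Q x)) ^ 3 := by
        show deriv (deriv fun r => r * Q r) x = _
        rw [hev.deriv_eq, (hgd x hx).deriv]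
      rw [h1]
      have hQx : 0 < Q x := hQpos x hx
      have hP'Q : 0 < P' (Q x) := hP'pos (Q x) (hQmem x (mem_Ioi.1 hx).le)
      have h2 := hineq (Q x) (hQmem x (mem_Ioi.1 hx).le)
      have h3 : x = P (Q x) := (hPQ x (mem_Ioi.1 hx).le).symm
      apply div_nonneg _ (le_of_lt (pow_pos hP'Q 3))
      rw [show x * P'' (Q x) = P (Q x) * P'' (Q x) by rw [← h3]]
      linarith
end

section
/- Let P(r) = p(r) + (γ/2) r² be an admissible generalized pressure function with constants α > 0, β > 2 and c > 0 such that P'(r)/r^{β−1} → c as r → ∞, where p ∈ C²([0,∞)) and γ > 0. Let W ∈ C²((0,∞)) be any energy function satisfying p'(r) = r W''(r) for r > 0. Then lim_{r→∞} W(r)/P(r) = 1/(β−1). -/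
open Filter Set

lemma aux0 (k : ℝ) (hk : 0 ≤ k) (g g' : ℝ → ℝ)
    (hg : ∀ x ∈ Ici (1:ℝ), HasDerivAt g (g' x) x)
    (hg'c : ContinuousOn g' (Ici 1))
    (h : Tendsto (fun x => g' x / x ^ k) atTop (nhds 0)) :
    Tendsto (fun x => g x / x ^ (k+1)) atTop (nhds 0) := by
  have hk1 : (0:ℝ) < k + 1 := by linarith
  rw [Metric.tendsto_nhds] at h ⊢
  intro ε hε
  have hε2 : 0 < ε / 2 := by linarith
  obtain ⟨R₀, hR₀⟩ := (h (ε/2) hε2).exists_forall_of_atTop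
  set R := max R₀ 1 with hRdef
  have hR1 : (1:ℝ) ≤ R := le_max_right _ _
  have hR0 : (0:ℝ) < R := lt_of_lt_of_le one_pos hR1
  have hbound : ∀ x, R ≤ x → |g' x| ≤ ε/2 * x ^ k := by
    intro x hx
    have hx1 : (1:ℝ) ≤ x := le_trans hR1 hx
    have hxpos : (0:ℝ) < x ^ k := Real.rpow_pos_of_pos (by linarith) k
    have := hR₀ x (le_trans (le_max_left _ _) hx)
    rw [Real.dist_eq, sub_zero, abs_div, abs_of_pos hxpos] at this
    have := le_of_lt this
    calc |g' x| = |g' x| / x ^ k * x ^ k := by field_simp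
    _ ≤ ε/2 * x ^ k := by nlinarith
  have hgb : ∀ x, R ≤ x → |g x| ≤ |g R| + ε/2 * x ^ (k+1) := by
    intro x hx
    have hx1 : (1:ℝ) ≤ x := le_trans hR1 hx
    have hsub : Icc R x ⊆ Ici (1:ℝ) := fun t ht => le_trans hR1 ht.1
    have hsub' : uIcc R x ⊆ Ici (1:ℝ) := by rw [uIcc_of_le hx]; exact hsub
    have hftc : ∫ t in R..x, g' t = g x - g R := by
      apply intervalIntegral.integral_eq_sub_of_hasDerivAt
      · intro t ht; exact hg t (hsub' ht)
      · exact (hg'c.mono hsub').intervalIntegrable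
    have hint1 : IntervalIntegrable (fun t => |g' t|) MeasureTheory.volume R x :=
      ((hg'c.mono hsub').abs).intervalIntegrable
    have hint2 : IntervalIntegrable (fun t : ℝ => ε/2 * t ^ k) MeasureTheory.volume R x := by
      apply ContinuousOn.intervalIntegrable
      apply ContinuousOn.mul continuousOn_const
      intro t ht
      exact (Real.continuousAt_rpow_const t k (Or.inl (by
        have := hsub' ht; simp only [mem_Ici] at this; linarith))).continuousWithinAt
    have h1 : |∫ t in R..x, g' t| ≤ ∫ t in R..x, |g' t| :=
      intervalIntegral.abs_integral_le_integral_abs hx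
    have h2 : ∫ t in R..x, |g' t| ≤ ∫ t in R..x, ε/2 * t ^ k := by
      apply intervalIntegral.integral_mono_on hx hint1 hint2
      intro t ht; exact hbound t ht.1
    have h3 : ∫ t in R..x, ε/2 * t ^ k = ε/2 * ((x ^ (k+1) - R ^ (k+1)) / (k+1)) := by
      rw [intervalIntegral.integral_const_mul, integral_rpow (Or.inl (by linarith))]
    have hRk : (0:ℝ) < R ^ (k+1) := Real.rpow_pos_of_pos hR0 _
    have h4 : ε/2 * ((x ^ (k+1) - R ^ (k+1)) / (k+1)) ≤ ε/2 * x ^ (k+1) := by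
      have hxk : R ^ (k+1) ≤ x ^ (k+1) := Real.rpow_le_rpow (le_of_lt hR0) hx (le_of_lt hk1)
      have h5 : (x ^ (k+1) - R ^ (k+1)) / (k+1) ≤ x ^ (k+1) := by
        rw [div_le_iff₀ hk1]
        nlinarith [Real.rpow_pos_of_pos (lt_of_lt_of_le hR0 hx) (k+1)]
      nlinarith
    have := abs_sub_abs_le_abs_sub (g x) (g R)
    rw [← hftc] at this
    nlinarith [abs_nonneg (g R)]
  have htop : Tendsto (fun x : ℝ => x ^ (k+1)) atTop atTop := tendsto_rpow_atTop hk1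
  have hsmall : Tendsto (fun x : ℝ => |g R| / x ^ (k+1)) atTop (nhds 0) :=
    Tendsto.div_atTop tendsto_const_nhds htop
  have hev : ∀ᶠ x : ℝ in atTop, |g R| / x ^ (k+1) < ε/2 := by
    have := Metric.tendsto_nhds.mp hsmall (ε/2) hε2
    filter_upwards [this] with x hx
    calc |g R| / x ^ (k+1) ≤ |(|g R| / x ^ (k+1))| := le_abs_self _
    _ < ε/2 := by rwa [Real.dist_eq, sub_zero] at hx
  filter_upwards [hev, eventually_ge_atTop R] with x hx1 hx2
  rw [Real.dist_eq, sub_zero]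
  have hxpos : (0:ℝ) < x ^ (k+1) := Real.rpow_pos_of_pos (lt_of_lt_of_le hR0 hx2) _
  have := hgb x hx2
  have habs : |g x / x ^ (k+1)| = |g x| / x ^ (k+1) := by
    rw [abs_div, abs_of_pos hxpos]
  rw [habs, div_lt_iff₀ hxpos]
  have hgR : 0 ≤ |g R| := abs_nonneg _
  nlinarith [div_nonneg hgR (le_of_lt hxpos), (div_lt_iff₀ hxpos).mp hx1]

lemma keylem (k L : ℝ) (hk : 0 ≤ k) (f f' : ℝ → ℝ)
    (hf : ∀ x ∈ Ici (1:ℝ), HasDerivAt f (f' x) x)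
    (hf'c : ContinuousOn f' (Ici 1))
    (h : Tendsto (fun x => f' x / x ^ k) atTop (nhds L)) :
    Tendsto (fun x => f x / x ^ (k+1)) atTop (nhds (L/(k+1))) := by
  have hk1 : (0:ℝ) < k + 1 := by linarith
  set g : ℝ → ℝ := fun x => f x - L/(k+1) * x ^ (k+1) with hgdef
  set g' : ℝ → ℝ := fun x => f' x - L * x ^ k with hg'def
  have hgd : ∀ x ∈ Ici (1:ℝ), HasDerivAt g (g' x) x := by
    intro x hx
    have hx0 : x ≠ 0 := by simp only [mem_Ici] at hx; linarith
    have h1 : HasDerivAt (fun y : ℝ => y ^ (k+1)) ((k+1) * x ^ (k+1-1)) x :=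
      Real.hasDerivAt_rpow_const (Or.inl hx0)
    have h2 : HasDerivAt (fun y : ℝ => L/(k+1) * y ^ (k+1)) (L/(k+1) * ((k+1) * x ^ (k+1-1))) x :=
      h1.const_mul _
    have h3 : L/(k+1) * ((k+1) * x ^ (k+1-1)) = L * x ^ k := by
      rw [show k + 1 - 1 = k by ring]
      field_simp
    rw [h3] at h2
    exact (hf x hx).sub h2
  have hg'c : ContinuousOn g' (Ici 1) := by
    apply hf'c.sub
    apply ContinuousOn.mul continuousOn_const
    intro t ht
    simp only [mem_Ici] at ht
    exact (Real.continuousAt_rpow_const t k (Or.inl (by linarith))).continuousWithinAt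
  have hg'lim : Tendsto (fun x => g' x / x ^ k) atTop (nhds 0) := by
    have : Tendsto (fun x : ℝ => f' x / x ^ k - L) atTop (nhds (L - L)) :=
      h.sub tendsto_const_nhds
    rw [sub_self] at this
    apply this.congr'
    filter_upwards [eventually_ge_atTop (1:ℝ)] with x hx
    have hxpos : (0:ℝ) < x ^ k := Real.rpow_pos_of_pos (by linarith) k
    simp only [hg'def]
    field_simp
  have h0 := aux0 k hk g g' hgd hg'c hg'lim
  have : Tendsto (fun x : ℝ => g x / x ^ (k+1) + L/(k+1)) atTop (nhds (0 + L/(k+1))) :=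
    h0.add tendsto_const_nhds
  rw [zero_add] at this
  apply this.congr'
  filter_upwards [eventually_ge_atTop (1:ℝ)] with x hx
  have hxpos : (0:ℝ) < x ^ (k+1) := Real.rpow_pos_of_pos (by linarith) _
  simp only [hgdef]
  field_simp
  ring


open Filter Set

/-- For an admissible generalized pressure function
`P(r) = p(r) + (γ/2) r²` with constants `α > 0`, `β > 2`, `c > 0` such that
`P'(r)/r^{β-1} → c`, and any energy function `W ∈ C²((0,∞))` with `p'(r) = r W''(r)`,
one has `W(r)/P(r) → 1/(β-1)` as `r → ∞`. -/
theorem stmt4 (α β c γ : ℝ) (hα : 0 < α) (hβ : 2 < β) (hc : 0 < c) (hγ : 0 < γ)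
    (p p' p'' P P' P'' Q W W' W'' : ℝ → ℝ)
    -- the generalized pressure is `P(r) = p(r) + (γ/2) r²`, with `p ∈ C²([0,∞))`
    (hPdef : ∀ r : ℝ, P r = p r + γ / 2 * r ^ 2)
    (hp' : ∀ r ∈ Set.Ici (0 : ℝ), HasDerivAt p (p' r) r)
    (hp'' : ∀ r ∈ Set.Ici (0 : ℝ), HasDerivAt p' (p'' r) r)
    (hp''cont : ContinuousOn p'' (Set.Ici 0))
    -- requirements (1)-(3) of admissibility
    (hP0 : P 0 = 0)
    (hP' : ∀ r ∈ Set.Ici (0 : ℝ), HasDerivAt P (P' r) r)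
    (hP'' : ∀ r ∈ Set.Ici (0 : ℝ), HasDerivAt P' (P'' r) r)
    (hP''cont : ContinuousOn P'' (Set.Ici 0))
    (hPα : ∀ r ∈ Set.Ici (0 : ℝ), α ≤ P' r ∧ α ≤ P'' r)
    -- requirement (4): `r ↦ r · P⁻¹(r)` is convex, `Q` being the inverse of `P`
    (hQmem : ∀ r ∈ Set.Ici (0 : ℝ), Q r ∈ Set.Ici (0 : ℝ))
    (hPQ : ∀ r ∈ Set.Ici (0 : ℝ), P (Q r) = r)
    (hconv : ConvexOn ℝ (Set.Ici 0) (fun r => r * Q r))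
    -- requirement (5) with `β > 2`, `c > 0`
    (hlim : Tendsto (fun r : ℝ => P' r / r ^ (β - 1)) atTop (nhds c))
    -- the energy function `W ∈ C²((0,∞))` with `p'(r) = r W''(r)` for `r > 0`
    (hW' : ∀ r ∈ Set.Ioi (0 : ℝ), HasDerivAt W (W' r) r)
    (hW'' : ∀ r ∈ Set.Ioi (0 : ℝ), HasDerivAt W' (W'' r) r)
    (hW''cont : ContinuousOn W'' (Set.Ioi 0))
    (hpW : ∀ r ∈ Set.Ioi (0 : ℝ), p' r = r * W'' r) :
    Tendsto (fun r : ℝ => W r / P r) atTop (nhds (1 / (β - 1))) := by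

  have hβ0 : (0:ℝ) < β := by linarith
  have hβ1 : (0:ℝ) < β - 1 := by linarith
  -- P' r = p' r + γ * r
  have hP'eq : ∀ r : ℝ, 0 ≤ r → P' r = p' r + γ * r := by
    intro r hr
    have h2 : HasDerivAt (fun x : ℝ => γ/2 * x^2) (γ/2 * (↑(2:ℕ) * r^1)) r :=
      (hasDerivAt_pow 2 r).const_mul (γ/2)
    have h1 : HasDerivAt (fun x : ℝ => p x + γ/2 * x^2) (p' r + γ/2 * (↑(2:ℕ) * r^1)) r :=
      (hp' r hr).add h2
    have h3 : HasDerivAt P (p' r + γ/2 * (↑(2:ℕ) * r^1)) r := by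
      have hPe : P = fun x : ℝ => p x + γ/2 * x^2 := funext hPdef
      rw [hPe]; exact h1
    have := (hP' r hr).unique h3
    rw [this]; push_cast; ring
  -- W'' r = P' r / r - γ
  have hW''eq : ∀ r : ℝ, 0 < r → W'' r = P' r / r - γ := by
    intro r hr
    have h := hpW r hr
    have h2 := hP'eq r (le_of_lt hr)
    rw [h2, h]
    field_simp
    ring
  -- limit of W'' / r^(β-2)
  have hW''lim : Tendsto (fun r : ℝ => W'' r / r ^ (β - 2)) atTop (nhds c) := by
    have hγ0 : Tendsto (fun r : ℝ => γ / r ^ (β - 2)) atTop (nhds 0) :=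
      Tendsto.div_atTop tendsto_const_nhds (tendsto_rpow_atTop (by linarith))
    have hcomb := hlim.sub hγ0
    rw [sub_zero] at hcomb
    apply hcomb.congr'
    filter_upwards [eventually_ge_atTop (1:ℝ)] with r hr
    have hr0 : (0:ℝ) < r := by linarith
    have hrk : (0:ℝ) < r ^ (β - 2) := Real.rpow_pos_of_pos hr0 _
    rw [hW''eq r hr0, show β - 1 = 1 + (β - 2) by ring, Real.rpow_add hr0, Real.rpow_one]
    field_simp
  -- derivatives and continuity on Ici 1
  have hIci1 : Ici (1:ℝ) ⊆ Ioi 0 := fun t ht => mem_Ioi.mpr (lt_of_lt_of_le one_pos ht)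
  have hIci1' : Ici (1:ℝ) ⊆ Ici 0 := fun t ht => mem_Ici.mpr (le_trans zero_le_one ht)
  have hdW' : ∀ x ∈ Ici (1:ℝ), HasDerivAt W' (W'' x) x := fun x hx => hW'' x (hIci1 hx)
  have hcW'' : ContinuousOn W'' (Ici 1) := hW''cont.mono hIci1
  have hdW : ∀ x ∈ Ici (1:ℝ), HasDerivAt W (W' x) x := fun x hx => hW' x (hIci1 hx)
  have hcW' : ContinuousOn W' (Ici 1) :=
    fun x hx => ((hW'' x (hIci1 hx)).continuousAt).continuousWithinAt
  have hdP : ∀ x ∈ Ici (1:ℝ), HasDerivAt P (P' x) x := fun x hx => hP' x (hIci1' hx)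
  have hcP' : ContinuousOn P' (Ici 1) :=
    fun x hx => ((hP'' x (hIci1' hx)).continuousAt).continuousWithinAt
  -- first integration
  have hW'lim : Tendsto (fun r : ℝ => W' r / r ^ (β - 1)) atTop (nhds (c / (β - 1))) := by
    have := keylem (β - 2) c (by linarith) W' W'' hdW' hcW'' hW''lim
    rw [show β - 2 + 1 = β - 1 by ring] at this
    exact this
  -- second integration
  have hWlim : Tendsto (fun r : ℝ => W r / r ^ β) atTop (nhds (c / (β - 1) / β)) := by
    have := keylem (β - 1) (c / (β - 1)) (by linarith) W W' hdW hcW' hW'lim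
    rw [show β - 1 + 1 = β by ring] at this
    exact this
  -- limit of P / r^β
  have hPlim : Tendsto (fun r : ℝ => P r / r ^ β) atTop (nhds (c / β)) := by
    have := keylem (β - 1) c (by linarith) P P' hdP hcP' hlim
    rw [show β - 1 + 1 = β by ring] at this
    exact this
  -- conclude
  have hcβ : c / β ≠ 0 := ne_of_gt (div_pos hc hβ0)
  have hfin := hWlim.div hPlim hcβ
  have hval : c / (β - 1) / β / (c / β) = 1 / (β - 1) := by
    field_simp
  rw [hval] at hfin
  apply hfin.congr'
  filter_upwards [eventually_ge_atTop (1:ℝ)] with r hr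
  have hrβ : r ^ β ≠ 0 := ne_of_gt (Real.rpow_pos_of_pos (by linarith) β)
  exact div_div_div_cancel_right₀ hrβ (W r) (P r)
end

section
/- Let D ⊂ ℝ^N be a bounded domain. Let f : ℝ → ℝ be a differentiable convex function with f ≥ 0, f(x) = f(−x) for all x, and f'(x)/x^{b−1} → c ∈ [0,∞) as x → ∞, for some constant b ≥ 1. Fix a constant a with 2 ≤ a < ∞ and 2(b−1) ≤ a. Let φ_n ∈ L^a(D) be a sequence converging weakly in L^a(D) to φ ∈ L^a(D) (i.e. ∫_D φ_n g → ∫_D φ g for every g ∈ L^{a/(a−1)}(D)), and suppose f(φ_n) converges weakly in L¹(D) to ψ ∈ L¹(D) (i.e. ∫_D f(φ_n) g → ∫_D ψ g for every g ∈ L^∞(D)). Then ψ ≥ f(φ) almost everywhere in D. -/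
open Filter Set MeasureTheory

lemma stmt5_tangent {f : ℝ → ℝ} (hfdiff : Differentiable ℝ f)
    (hfconv : ConvexOn ℝ Set.univ f) (x y : ℝ) :
    f x + deriv f x * (y - x) ≤ f y := by
  rcases lt_trichotomy x y with h | h | h
  · have hs := hfconv.deriv_le_slope (mem_univ x) (mem_univ y) h (hfdiff x)
    rw [slope_def_field] at hs
    have hxy : 0 < y - x := by linarith
    have := (le_div_iff₀ hxy).mp hs
    linarith
  · subst h; simp
  · have hs := hfconv.slope_le_deriv (mem_univ y) (mem_univ x) h (hfdiff x)
    rw [slope_def_field] at hs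
    have hxy : 0 < x - y := by linarith
    have := (div_le_iff₀ hxy).mp hs
    linarith

lemma stmt5_rpow_le {t p q : ℝ} (ht : 0 ≤ t) (hp : 0 ≤ p) (hpq : p ≤ q) :
    t ^ p ≤ 1 + t ^ q := by
  rcases le_or_gt t 1 with h1 | h1
  · have := Real.rpow_le_one ht h1 hp
    have h0 : 0 ≤ t ^ q := Real.rpow_nonneg ht q
    linarith
  · have := Real.rpow_le_rpow_of_exponent_le h1.le hpq
    linarith


/-- If `φ_n ⇀ φ` weakly in `L^a(D)` and `f(φ_n) ⇀ ψ` weakly in `L¹(D)`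
for a differentiable, even, nonnegative convex `f` with `f'(x)/x^{b-1} → c ≥ 0`
(`b ≥ 1`, `2 ≤ a < ∞`, `2(b-1) ≤ a`), then `ψ ≥ f(φ)` a.e. in `D`. -/
theorem stmt5 (N : ℕ) (D : Set (EuclideanSpace ℝ (Fin N)))
    (hD : IsOpen D) (hDbd : Bornology.IsBounded D)
    (b c a : ℝ) (hb : 1 ≤ b) (hc : 0 ≤ c) (ha2 : 2 ≤ a) (hab : 2 * (b - 1) ≤ a)
    (f : ℝ → ℝ) (hfdiff : Differentiable ℝ f) (hfconv : ConvexOn ℝ Set.univ f)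
    (hfpos : ∀ x, 0 ≤ f x) (hfeven : ∀ x, f (-x) = f x)
    (hflim : Tendsto (fun x : ℝ => deriv f x / x ^ (b - 1)) atTop (nhds c))
    (φn : ℕ → EuclideanSpace ℝ (Fin N) → ℝ) (φ ψ : EuclideanSpace ℝ (Fin N) → ℝ)
    (hφn : ∀ n, MemLp (φn n) (ENNReal.ofReal a) (volume.restrict D))
    (hφ : MemLp φ (ENNReal.ofReal a) (volume.restrict D))
    (hfφn : ∀ n, IntegrableOn (fun x => f (φn n x)) D)
    (hψ : IntegrableOn ψ D)
    -- weak convergence `φ_n ⇀ φ` in `L^a(D)`: testing against all `g ∈ L^{a/(a-1)}(D)`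
    (hweak : ∀ g : EuclideanSpace ℝ (Fin N) → ℝ,
      MemLp g (ENNReal.ofReal (a / (a - 1))) (volume.restrict D) →
      Tendsto (fun n => ∫ x in D, φn n x * g x) atTop (nhds (∫ x in D, φ x * g x)))
    -- weak convergence `f(φ_n) ⇀ ψ` in `L¹(D)`: testing against all `g ∈ L^∞(D)`
    (hweak1 : ∀ g : EuclideanSpace ℝ (Fin N) → ℝ, Measurable g → (∃ C, ∀ x ∈ D, |g x| ≤ C) →
      Tendsto (fun n => ∫ x in D, f (φn n x) * g x) atTop (nhds (∫ x in D, ψ x * g x))) :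
    ∀ᵐ x ∂(volume.restrict D), f (φ x) ≤ ψ x := by
  classical
  have ha0 : (0:ℝ) < a := by linarith
  have ha1 : (0:ℝ) < a - 1 := by linarith
  have ha'0 : (0:ℝ) < a / (a - 1) := by positivity
  have hba : b - 1 ≤ a - 1 := by linarith
  have hb0 : (0:ℝ) ≤ b - 1 := by linarith
  haveI : IsFiniteMeasure (volume.restrict D) := by
    constructor
    rw [Measure.restrict_apply_univ]
    exact hDbd.measure_lt_top
  -- derivative facts
  have hmono : Monotone (deriv f) :=
    monotoneOn_univ.mp (hfconv.monotoneOn_deriv (fun x _ => hfdiff x))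
  have hodd : ∀ x : ℝ, deriv f (-x) = - deriv f x := by
    intro x
    have h1 : (fun y => f (-y)) = f := funext hfeven
    have h2 : deriv (fun y => f (-y)) x = - deriv f (-x) := deriv_comp_neg f x
    rw [h1] at h2
    linarith
  have h0 : deriv f 0 = 0 := by have := hodd 0; simp at this; linarith
  have hnn : ∀ x : ℝ, 0 ≤ x → 0 ≤ deriv f x := fun x hx => by
    have := hmono hx; rwa [h0] at this
  have habs : ∀ x : ℝ, |deriv f x| = deriv f |x| := by
    intro x
    rcases le_or_gt 0 x with hx | hx
    · rw [abs_of_nonneg hx, abs_of_nonneg (hnn x hx)]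
    · have hd : deriv f x ≤ 0 := by
        have h1 := hnn (-x) (by linarith)
        rw [hodd x] at h1; linarith
      rw [abs_of_neg hx, hodd x, abs_of_nonpos hd]
  -- growth bound for deriv f
  obtain ⟨M, hM1, hM⟩ : ∃ M : ℝ, 1 ≤ M ∧ ∀ x ≥ M, deriv f x ≤ (c + 1) * x ^ (b - 1) := by
    have hev : ∀ᶠ x : ℝ in atTop, deriv f x / x ^ (b - 1) < c + 1 :=
      hflim.eventually_lt_const (by linarith)
    rw [eventually_atTop] at hev
    obtain ⟨M₀, hM₀⟩ := hev
    refine ⟨max M₀ 1, le_max_right _ _, fun x hx => ?_⟩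
    have hx1 : (1:ℝ) ≤ x := le_trans (le_max_right _ _) hx
    have hxp : 0 < x ^ (b - 1) := Real.rpow_pos_of_pos (by linarith) _
    have hlt := hM₀ x (le_trans (le_max_left _ _) hx)
    have : deriv f x = deriv f x / x ^ (b - 1) * x ^ (b - 1) := by field_simp
    rw [this]
    nlinarith [hlt, hxp]
  have hC₁ : 0 ≤ deriv f M := hnn M (by linarith)
  set C₁ : ℝ := deriv f M with hC₁def
  have hdb : ∀ x : ℝ, |deriv f x| ≤ C₁ + (c + 1) * |x| ^ (b - 1) := by
    intro x
    rw [habs]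
    rcases le_or_gt M |x| with h | h
    · have h2 := hM |x| h
      linarith
    · have h2 : deriv f |x| ≤ C₁ := hmono h.le
      have h3 : 0 ≤ (c + 1) * |x| ^ (b - 1) := by positivity
      linarith
  have hdb2 : ∀ x : ℝ, |deriv f x| ≤ (C₁ + (c + 1)) * (1 + |x| ^ (a - 1)) := by
    intro x
    have h1 := hdb x
    have h2 : |x| ^ (b - 1) ≤ 1 + |x| ^ (a - 1) := stmt5_rpow_le (abs_nonneg x) hb0 hba
    have h3 : 0 ≤ |x| ^ (a - 1) := Real.rpow_nonneg (abs_nonneg x) _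
    nlinarith [hC₁]
  -- growth bound for f
  have hfb : ∀ x : ℝ, f x ≤ (f 0 + C₁ + (c + 1)) * (1 + |x| ^ a) := by
    intro x
    have hxe : f x = f |x| := by
      rcases le_or_gt 0 x with h | h
      · rw [abs_of_nonneg h]
      · rw [abs_of_neg h, hfeven]
    have htg := stmt5_tangent hfdiff hfconv |x| 0
    have hd := hdb x
    rw [habs] at hd
    have hxb : |x| ^ b = |x| ^ (b - 1) * |x| := by
      have h := Real.rpow_add' (abs_nonneg x) (by linarith : b - 1 + 1 ≠ 0)
      rw [sub_add_cancel] at h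
      simpa [Real.rpow_one] using h
    have h2 : |x| ≤ 1 + |x| ^ a := by
      have := stmt5_rpow_le (abs_nonneg x) zero_le_one (by linarith : (1:ℝ) ≤ a)
      simpa [Real.rpow_one] using this
    have h3 : |x| ^ b ≤ 1 + |x| ^ a :=
      stmt5_rpow_le (abs_nonneg x) (by linarith) (by linarith)
    have h4 : 0 ≤ |x| ^ a := Real.rpow_nonneg (abs_nonneg x) _
    have h5 : 0 ≤ f 0 := hfpos 0
    have h6 : deriv f |x| * |x| ≤ C₁ * |x| + (c + 1) * |x| ^ b := by
      have := mul_le_mul_of_nonneg_right hd (abs_nonneg x)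
      rw [hxb]
      nlinarith [this]
    rw [hxe]
    have h7 : f |x| ≤ f 0 + deriv f |x| * |x| := by nlinarith [htg]
    nlinarith [mul_le_mul_of_nonneg_left h2 hC₁,
      mul_le_mul_of_nonneg_left h3 (by linarith : (0:ℝ) ≤ c + 1),
      mul_nonneg h5 h4]
  -- measurability and integrability
  have hφm := hφ.1
  have hdm : Measurable (deriv f) := measurable_deriv f
  have hfc : Continuous f := hfdiff.continuous
  have hφa_int : Integrable (fun x => ‖φ x‖ ^ a) (volume.restrict D) := by
    have h := hφ.norm_rpow (ENNReal.ofReal_pos.mpr ha0).ne' ENNReal.ofReal_ne_top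
    rw [ENNReal.toReal_ofReal ha0.le] at h
    exact memLp_one_iff_integrable.mp h
  have hfφ_int : Integrable (fun x => f (φ x)) (volume.restrict D) := by
    have hgint : Integrable (fun x => (f 0 + C₁ + (c + 1)) * (1 + ‖φ x‖ ^ a))
        (volume.restrict D) := (((integrable_const (1:ℝ)).add hφa_int).const_mul _)
    refine hgint.mono' (hfc.comp_aestronglyMeasurable hφm) ?_
    filter_upwards with x
    rw [Real.norm_eq_abs, abs_of_nonneg (hfpos _)]
    have := hfb (φ x)
    simpa [Real.norm_eq_abs] using this
  have hr : MemLp (fun x => ‖φ x‖ ^ (a - 1)) (ENNReal.ofReal (a / (a - 1)))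
      (volume.restrict D) := by
    refine ⟨(hφm.norm.aemeasurable.pow aemeasurable_const).aestronglyMeasurable, ?_⟩
    rw [eLpNorm_norm_rpow φ ha1]
    have he : ENNReal.ofReal (a / (a - 1)) * ENNReal.ofReal (a - 1) = ENNReal.ofReal a := by
      rw [← ENNReal.ofReal_mul ha'0.le]
      congr 1
      field_simp
    rw [he]
    exact ENNReal.rpow_lt_top_of_nonneg (by linarith) hφ.2.ne
  have hG0 : MemLp (fun x => deriv f (φ x)) (ENNReal.ofReal (a / (a - 1)))
      (volume.restrict D) := by
    have hbig : MemLp (fun x => (C₁ + (c + 1)) * (1 + ‖φ x‖ ^ (a - 1)))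
        (ENNReal.ofReal (a / (a - 1))) (volume.restrict D) :=
      ((memLp_const (1:ℝ)).add hr).const_mul _
    refine MemLp.of_le hbig
      ((hdm.comp_aemeasurable hφm.aemeasurable).aestronglyMeasurable) ?_
    filter_upwards with x
    have h1 := hdb2 (φ x)
    have h2 : (0:ℝ) ≤ (C₁ + (c + 1)) * (1 + ‖φ x‖ ^ (a - 1)) := by positivity
    rw [Real.norm_eq_abs, Real.norm_eq_abs, abs_of_nonneg h2]
    simpa [Real.norm_eq_abs] using h1
  have hconj : (1 : ENNReal) / 1 = 1 / ENNReal.ofReal (a / (a - 1)) + 1 / ENNReal.ofReal a := by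
    have h1 : (a / (a - 1))⁻¹ + a⁻¹ = 1 := by field_simp; ring
    rw [one_div, one_div, one_div, inv_one,
      ← ENNReal.ofReal_inv_of_pos ha'0, ← ENNReal.ofReal_inv_of_pos ha0,
      ← ENNReal.ofReal_add (by positivity) (by positivity), h1, ENNReal.ofReal_one]
  have hmul : ∀ G : EuclideanSpace ℝ (Fin N) → ℝ,
      MemLp G (ENNReal.ofReal (a / (a - 1))) (volume.restrict D) →
      ∀ u : EuclideanSpace ℝ (Fin N) → ℝ, MemLp u (ENNReal.ofReal a) (volume.restrict D) →
      Integrable (fun x => u x * G x) (volume.restrict D) := by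
    intro G hG u hu
    have h : MemLp (G • u) 1 (volume.restrict D) := MemLp.smul hu hG (hpqr := ⟨by simpa only [one_div] using hconj.symm⟩)
    have h2 := memLp_one_iff_integrable.mp h
    have h3 : Integrable (fun x => G x * u x) (volume.restrict D) := h2
    simpa [mul_comm] using h3
  -- the main set-integral estimate
  have key : ∀ s, MeasurableSet s → (volume.restrict D) s < ⊤ →
      0 ≤ ∫ x in s, (ψ x - f (φ x)) ∂(volume.restrict D) := by
    intro s hs _
    set g : EuclideanSpace ℝ (Fin N) → ℝ := s.indicator (fun _ => 1) with hgdef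
    have hg_meas : Measurable g := measurable_const.indicator hs
    have hg_nonneg : ∀ x, 0 ≤ g x := by
      intro x; by_cases hx : x ∈ s <;> simp [hgdef, hx]
    have hg_le : ∀ x, |g x| ≤ 1 := by
      intro x; by_cases hx : x ∈ s <;> simp [hgdef, hx]
    set G : EuclideanSpace ℝ (Fin N) → ℝ := fun x => deriv f (φ x) * g x with hGdef
    have hGmem : MemLp G (ENNReal.ofReal (a / (a - 1))) (volume.restrict D) := by
      refine MemLp.of_le hG0 (hG0.1.mul hg_meas.aestronglyMeasurable) ?_
      filter_upwards with x
      calc ‖G x‖ = ‖deriv f (φ x)‖ * |g x| := by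
            rw [hGdef]; rw [norm_mul, Real.norm_eq_abs (g x)]
        _ ≤ ‖deriv f (φ x)‖ * 1 := mul_le_mul_of_nonneg_left (hg_le x) (norm_nonneg _)
        _ = ‖deriv f (φ x)‖ := mul_one _
    have hgbd : ∃ C : ℝ, ∀ x, ‖g x‖ ≤ C :=
      ⟨1, fun x => by simpa [Real.norm_eq_abs] using hg_le x⟩
    have hI1 : Integrable (fun x => f (φ x) * g x) (volume.restrict D) := by
      have h := Integrable.bdd_mul hfφ_int hg_meas.aestronglyMeasurable (ae_of_all _ hgbd.choose_spec)
      simpa [mul_comm] using h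
    have hI2 : ∀ n, Integrable (fun x => f (φn n x) * g x) (volume.restrict D) := by
      intro n
      have h := Integrable.bdd_mul (hfφn n) hg_meas.aestronglyMeasurable (ae_of_all _ hgbd.choose_spec)
      simpa [mul_comm] using h
    have hIn : ∀ n, Integrable (fun x => φn n x * G x) (volume.restrict D) :=
      fun n => hmul G hGmem _ (hφn n)
    have hIφ : Integrable (fun x => φ x * G x) (volume.restrict D) := hmul G hGmem φ hφ
    have hpt : ∀ n x, f (φ x) * g x + (φn n x * G x - φ x * G x) ≤ f (φn n x) * g x := by
      intro n x
      have h1 := stmt5_tangent hfdiff hfconv (φ x) (φn n x)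
      have h2 := mul_le_mul_of_nonneg_right h1 (hg_nonneg x)
      have e : f (φ x) * g x + (φn n x * G x - φ x * G x)
          = (f (φ x) + deriv f (φ x) * (φn n x - φ x)) * g x := by
        rw [hGdef]; ring
      rw [e]; exact h2
    have heq : ∀ n, (∫ x in D, (f (φ x) * g x + (φn n x * G x - φ x * G x)))
        = (∫ x in D, f (φ x) * g x)
          + ((∫ x in D, φn n x * G x) - ∫ x in D, φ x * G x) := by
      intro n
      have hsub' : Integrable (fun x => φn n x * G x - φ x * G x) (volume.restrict D) :=
        (hIn n).sub hIφ
      rw [integral_add hI1 hsub', integral_sub (hIn n) hIφ]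
    have hL : Tendsto (fun n => ∫ x in D, (f (φ x) * g x + (φn n x * G x - φ x * G x)))
        atTop (nhds (∫ x in D, f (φ x) * g x)) := by
      have h1 : Tendsto (fun n => (∫ x in D, f (φ x) * g x)
            + ((∫ x in D, φn n x * G x) - ∫ x in D, φ x * G x)) atTop
          (nhds ((∫ x in D, f (φ x) * g x)
            + ((∫ x in D, φ x * G x) - ∫ x in D, φ x * G x))) :=
        tendsto_const_nhds.add ((hweak G hGmem).sub tendsto_const_nhds)
      rw [sub_self, add_zero] at h1
      exact h1.congr (fun n => (heq n).symm)
    have hR := hweak1 g hg_meas ⟨1, fun x _ => hg_le x⟩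
    have hle : (∫ x in D, f (φ x) * g x) ≤ ∫ x in D, ψ x * g x :=
      le_of_tendsto_of_tendsto' hL hR
        (fun n => integral_mono (hI1.add ((hIn n).sub hIφ)) (hI2 n) (fun x => hpt n x))
    have hind : ∀ F : EuclideanSpace ℝ (Fin N) → ℝ,
        (∫ x in D, F x * g x) = ∫ x in s, F x ∂(volume.restrict D) := by
      intro F
      rw [← integral_indicator hs]
      congr 1
      funext x
      by_cases hx : x ∈ s <;> simp [hgdef, hx]
    have h1 : (∫ x in D, ψ x * g x) = ∫ x in s, ψ x ∂(volume.restrict D) := hind ψ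
    have h2 : (∫ x in D, f (φ x) * g x) = ∫ x in s, f (φ x) ∂(volume.restrict D) :=
      hind (fun x => f (φ x))
    have hψ' : Integrable ψ (volume.restrict D) := hψ
    rw [integral_sub hψ'.restrict hfφ_int.restrict, sub_nonneg, ← h1, ← h2]
    exact hle
  have hsub : Integrable (fun x => ψ x - f (φ x)) (volume.restrict D) :=
    Integrable.sub hψ hfφ_int
  have hae := ae_nonneg_of_forall_setIntegral_nonneg hsub key
  filter_upwards [hae] with x hx
  have hx' : (0:ℝ) ≤ ψ x - f (φ x) := hx
  linarith
end
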